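/- Let n ≥ 2 and k be positive integers with k ≥ n-1 (so that K(2n+k,n) has diameter two). Then the geodetic hull number of K(2n+k,n) equals 3 if and only if (n,k) ∈ {(2,1), (2,2), (3,2)}, i.e., the only Kneser graphs of diameter two with geodetic hull number three are K(5,2), K(6,2), and K(8,3). -/

import Mathlib

/-- The Kneser graph `K(m, n)`: vertices are the `n`-element subsets of an `m`-element
ground set, with edges between disjoint sets. -/
def KneserGraph (m n : ℕ) : SimpleGraph {s : Finset (Fin m) // s.card = n} where
  Adj u v := Disjoint u.1 v.1 ∧ u ≠ v
  symm := ⟨fun u v ⟨h, hne⟩ => ⟨h.symm, hne.symm⟩⟩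
  loopless := ⟨fun u ⟨_, h⟩ => h rfl⟩

/-- The geodetic interval `I[u,v]`: all vertices lying on some shortest `u,v`-path. -/
def geodInterval {V : Type*} (G : SimpleGraph V) (u v : V) : Set V :=
  {w | G.dist u w + G.dist w v = G.dist u v}

/-- `I[W] = ⋃_{u,v ∈ W} I[u,v]`. -/
def geodIntervalSet {V : Type*} (G : SimpleGraph V) (W : Set V) : Set V :=
  ⋃ (u ∈ W) (v ∈ W), geodInterval G u v

/-- `W` is a geodetic set if `I[W] = V(G)`. -/
def IsGeodeticSet {V : Type*} (G : SimpleGraph V) (W : Set V) : Prop :=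
  geodIntervalSet G W = Set.univ

/-- `W` is geodetically convex if `I[W] = W`. -/
def IsGConvex {V : Type*} (G : SimpleGraph V) (W : Set V) : Prop :=
  geodIntervalSet G W = W

/-- The geodetic hull `H[W]`: the smallest g-convex set containing `W`. -/
def geodHull {V : Type*} (G : SimpleGraph V) (W : Set V) : Set V :=
  ⋂₀ {C | IsGConvex G C ∧ W ⊆ C}

/-- `W` is a geodetic hull set if `H[W] = V(G)`. -/
def IsGeodHullSet {V : Type*} (G : SimpleGraph V) (W : Set V) : Prop :=
  geodHull G W = Set.univ

/-- The geodetic number: minimum cardinality of a geodetic set. -/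
noncomputable def geodeticNumber {V : Type*} (G : SimpleGraph V) : ℕ :=
  sInf {m | ∃ W : Set V, IsGeodeticSet G W ∧ W.ncard = m}

/-- The geodetic hull number: minimum cardinality of a geodetic hull set. -/
noncomputable def geodHullNumber {V : Type*} (G : SimpleGraph V) : ℕ :=
  sInf {m | ∃ W : Set V, IsGeodHullSet G W ∧ W.ncard = m}

/-- The function `H(n,k)` from the paper. -/
def Hfun (n k : ℕ) : ℕ := if n % k ≤ 1 then n % k + k - 2 else n % k - 2

/-- `p = (⌈(n-1)/(2k)⌉ - 1)·k + 1`, computed in `ℤ`. -/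
def pInt (n k : ℕ) : ℤ := (⌈((n : ℚ) - 1) / (2 * k)⌉ - 1) * k + 1

section Lemmas

variable {M n : ℕ}

abbrev KV (M n : ℕ) := {s : Finset (Fin M) // s.card = n}

namespace KneserAux

open SimpleGraph Finset

lemma adj_iff {u v : KV M n} : (KneserGraph M n).Adj u v ↔ Disjoint u.1 v.1 ∧ u ≠ v := Iff.rfl

lemma reachable (hn : 1 ≤ n) (hM : 3 * n - 1 ≤ M) (u v : KV M n) :
    (KneserGraph M n).Reachable u v := by
  by_cases he : u = v
  · exact he ▸ Reachable.refl u
  by_cases hd : Disjoint u.1 v.1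
  · exact (Adj.reachable ⟨hd, he⟩)
  -- find common neighbor
  have hcard : n ≤ (u.1 ∪ v.1)ᶜ.card := by
    have h1 : (u.1 ∪ v.1).card ≤ 2 * n - 1 := by
      have := Finset.card_union_le u.1 v.1
      have hinter : 1 ≤ (u.1 ∩ v.1).card := by
        rcases Finset.not_disjoint_iff.mp hd with ⟨a, ha1, ha2⟩
        exact Finset.card_pos.mpr ⟨a, Finset.mem_inter.mpr ⟨ha1, ha2⟩⟩
      have := Finset.card_inter_add_card_union u.1 v.1
      omega
    have h2 := Finset.card_compl (u.1 ∪ v.1)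
    have h4 : Fintype.card (Fin M) = M := Fintype.card_fin M
    omega
  obtain ⟨t, ht, htc⟩ := Finset.exists_subset_card_eq hcard
  have hdu : Disjoint t u.1 := by
    refine Finset.disjoint_left.mpr fun a hat hau => ?_
    have := Finset.mem_compl.mp (ht hat)
    exact this (Finset.mem_union_left _ hau)
  have hdv : Disjoint t v.1 := by
    refine Finset.disjoint_left.mpr fun a hat hav => ?_
    have := Finset.mem_compl.mp (ht hat)
    exact this (Finset.mem_union_right _ hav)
  have htne : t.Nonempty := Finset.card_pos.mp (by omega)
  have hne1 : (⟨t, htc⟩ : KV M n) ≠ u := by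
    intro h
    obtain ⟨a, ha⟩ := htne
    exact Finset.disjoint_left.mp hdu ha (by rw [← h]; exact ha)
  have hne2 : (⟨t, htc⟩ : KV M n) ≠ v := by
    intro h
    obtain ⟨a, ha⟩ := htne
    exact Finset.disjoint_left.mp hdv ha (by rw [← h]; exact ha)
  exact Reachable.trans (Adj.reachable ⟨hdu.symm, Ne.symm hne1⟩) (Adj.reachable ⟨hdv, hne2⟩)

lemma dist_eq_two {u v w : KV M n} (hn : 1 ≤ n) (hnd : ¬ Disjoint u.1 v.1) (hne : u ≠ v)
    (h1 : (KneserGraph M n).Adj u w) (h2 : (KneserGraph M n).Adj w v) :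
    (KneserGraph M n).dist u v = 2 := by
  have hle : (KneserGraph M n).dist u v ≤ 2 := by
    have := SimpleGraph.dist_le ((h1.toWalk.append h2.toWalk))
    simpa using this
  have hne0 : (KneserGraph M n).dist u v ≠ 0 := by
    intro h
    rcases SimpleGraph.dist_eq_zero_iff_eq_or_not_reachable.mp h with h' | h'
    · exact hne h'
    · exact h' (Reachable.trans h1.reachable h2.reachable)
  have hne1 : (KneserGraph M n).dist u v ≠ 1 := by
    intro h
    exact hnd (SimpleGraph.dist_eq_one_iff_adj.mp h).1
  omega

/-- The key step: if `w1, w2` are distinct intersecting vertices of a convex set `S`,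
then every vertex disjoint from both is in `S`. -/
lemma stepP {S : Set (KV M n)} (hS : IsGConvex (KneserGraph M n) S)
    {w1 w2 : KV M n} (h1 : w1 ∈ S) (h2 : w2 ∈ S)
    (hnd : ¬ Disjoint w1.1 w2.1) (hne : w1 ≠ w2) (hn : 1 ≤ n) :
    ∀ w : KV M n, Disjoint w.1 (w1.1 ∪ w2.1) → w ∈ S := by
  intro w hw
  have hd1 : Disjoint w.1 w1.1 := Finset.disjoint_union_right.mp hw |>.1
  have hd2 : Disjoint w.1 w2.1 := Finset.disjoint_union_right.mp hw |>.2
  have hwnon : w.1.Nonempty := Finset.card_pos.mp (by rw [w.2]; omega)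
  have hwne1 : w ≠ w1 := by
    intro h
    obtain ⟨a, ha⟩ := hwnon
    exact Finset.disjoint_left.mp hd1 ha (by rw [← h]; exact ha)
  have hwne2 : w ≠ w2 := by
    intro h
    obtain ⟨a, ha⟩ := hwnon
    exact Finset.disjoint_left.mp hd2 ha (by rw [← h]; exact ha)
  have ha1 : (KneserGraph M n).Adj w1 w := ⟨hd1.symm, Ne.symm hwne1⟩
  have ha2 : (KneserGraph M n).Adj w w2 := ⟨hd2, hwne2⟩
  have hdist : (KneserGraph M n).dist w1 w2 = 2 := dist_eq_two hn hnd hne ha1 ha2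
  have hmem : w ∈ geodInterval (KneserGraph M n) w1 w2 := by
    show (KneserGraph M n).dist w1 w + (KneserGraph M n).dist w w2 = _
    rw [hdist, SimpleGraph.dist_eq_one_iff_adj.mpr ha1, SimpleGraph.dist_eq_one_iff_adj.mpr ha2]
  have : w ∈ geodIntervalSet (KneserGraph M n) S := by
    simp only [geodIntervalSet, Set.mem_iUnion]
    exact ⟨w1, h1, w2, h2, hmem⟩
  rwa [hS] at this

end KneserAux
end Lemmas
section Spread
namespace KneserAux
open SimpleGraph Finset

variable {M n : ℕ}

/-- From "everything disjoint from `D` is in `S`" and a new `(n+1)`-set `U` disjoint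
from `D`, get "everything disjoint from `U` is in `S`". -/
lemma spreadD {S : Set (KV M n)} (hS : IsGConvex (KneserGraph M n) S) (hn : 2 ≤ n)
    {D U : Finset (Fin M)} (hQ : ∀ w : KV M n, Disjoint w.1 D → w ∈ S)
    (hU : U.card = n + 1) (hUD : Disjoint U D) :
    ∀ w : KV M n, Disjoint w.1 U → w ∈ S := by
  obtain ⟨a, ha⟩ := Finset.card_pos.mp (show 0 < U.card by omega)
  have hea : (U.erase a).card = n := by rw [Finset.card_erase_of_mem ha, hU]; omega
  obtain ⟨b, hb⟩ := Finset.card_pos.mp (show 0 < (U.erase a).card by omega)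
  have hba : b ≠ a := Finset.ne_of_mem_erase hb
  have hbU : b ∈ U := Finset.mem_of_mem_erase hb
  have heb : (U.erase b).card = n := by rw [Finset.card_erase_of_mem hbU, hU]; omega
  set w1 : KV M n := ⟨U.erase a, hea⟩
  set w2 : KV M n := ⟨U.erase b, heb⟩
  have h1 : w1 ∈ S := hQ w1 (Finset.disjoint_of_subset_left (Finset.erase_subset a U) hUD)
  have h2 : w2 ∈ S := hQ w2 (Finset.disjoint_of_subset_left (Finset.erase_subset b U) hUD)
  -- common element
  obtain ⟨c, hc⟩ : ((U.erase a).erase b).Nonempty := by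
    apply Finset.card_pos.mp
    rw [Finset.card_erase_of_mem hb, hea]
    omega
  have hnd : ¬ Disjoint w1.1 w2.1 := by
    apply Finset.not_disjoint_iff.mpr
    refine ⟨c, Finset.mem_of_mem_erase hc, ?_⟩
    have hcU : c ∈ U := Finset.mem_of_mem_erase (Finset.mem_of_mem_erase hc)
    exact Finset.mem_erase.mpr ⟨Finset.ne_of_mem_erase hc, hcU⟩
  have hne : w1 ≠ w2 := by
    intro h
    have : a ∈ U.erase a := by
      rw [show U.erase a = w1.1 from rfl, h]
      exact Finset.mem_erase.mpr ⟨Ne.symm hba, ha⟩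
    exact Finset.notMem_erase a U this
  have hun : w1.1 ∪ w2.1 = U := by
    apply Finset.Subset.antisymm
    · exact Finset.union_subset (Finset.erase_subset a U) (Finset.erase_subset b U)
    · intro x hx
      by_cases hxa : x = a
      · exact Finset.mem_union_right _ (Finset.mem_erase.mpr ⟨hxa ▸ Ne.symm hba, hx⟩)
      · exact Finset.mem_union_left _ (Finset.mem_erase.mpr ⟨hxa, hx⟩)
  intro w hw
  exact stepP hS h1 h2 hnd hne (by omega) w (by rwa [hun])

/-- Every `(n+1)`-set has the `Q` property, by connectivity of swaps. -/
lemma allQ {S : Set (KV M n)} {k : ℕ} (hM : M = 2 * n + k)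
    (hS : IsGConvex (KneserGraph M n) S) (hn : 2 ≤ n) (hk : 3 ≤ k)
    {B : Finset (Fin M)} (hB : B.card = n + 1)
    (hbase : ∀ w : KV M n, Disjoint w.1 B → w ∈ S) :
    ∀ U : Finset (Fin M), U.card = n + 1 → ∀ w : KV M n, Disjoint w.1 U → w ∈ S := by
  have hcompl : ∀ T : Finset (Fin M), Tᶜ.card = M - T.card := by
    intro T; rw [Finset.card_compl, Fintype.card_fin]
  -- strong induction on |U ∩ B|
  suffices h : ∀ j : ℕ, ∀ U : Finset (Fin M), U.card = n + 1 → (U ∩ B).card ≤ j →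
      ∀ w : KV M n, Disjoint w.1 U → w ∈ S by
    intro U hU
    exact h (U ∩ B).card U hU le_rfl
  intro j
  induction j with
  | zero =>
    intro U hU hUB w hw
    -- U disjoint from B
    have hdUB : Disjoint U B :=
      Finset.disjoint_iff_inter_eq_empty.mpr (Finset.card_eq_zero.mp (by omega))
    exact spreadD hS hn hbase hU hdUB w hw
  | succ j ih =>
    intro U hU hUB w hw
    by_cases h0 : (U ∩ B).card ≤ j
    · exact ih U hU h0 w hw
    -- pick b ∈ U ∩ B, a ∈ Bᶜ \ U
    obtain ⟨b, hbmem⟩ := Finset.card_pos.mp (show 0 < (U ∩ B).card by omega)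
    have hbU : b ∈ U := (Finset.mem_inter.mp hbmem).1
    have hcard2 : 0 < (Bᶜ \ U).card := by
      have h1 := hcompl B
      have h3 := Finset.le_card_sdiff U Bᶜ
      have h4 := Finset.card_le_univ B
      have h5 : (Finset.univ : Finset (Fin M)).card = M := by simp
      omega
    obtain ⟨a, hamem⟩ := Finset.card_pos.mp hcard2
    have haB : a ∉ B := Finset.mem_compl.mp (Finset.mem_sdiff.mp hamem).1
    have haU : a ∉ U := (Finset.mem_sdiff.mp hamem).2
    set U' : Finset (Fin M) := insert a (U.erase b) with hU'def
    have hU'card : U'.card = n + 1 := by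
      rw [hU'def, Finset.card_insert_of_notMem (fun h => haU (Finset.mem_of_mem_erase h)),
        Finset.card_erase_of_mem hbU, hU]
      omega
    have hU'B : (U' ∩ B).card ≤ j := by
      have hsub : U' ∩ B ⊆ (U ∩ B).erase b := by
        intro x hx
        obtain ⟨hx1, hx2⟩ := Finset.mem_inter.mp hx
        rcases Finset.mem_insert.mp hx1 with rfl | hx3
        · exact absurd hx2 haB
        · exact Finset.mem_erase.mpr ⟨Finset.ne_of_mem_erase hx3,
            Finset.mem_inter.mpr ⟨Finset.mem_of_mem_erase hx3, hx2⟩⟩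
      have := Finset.card_le_card hsub
      rw [Finset.card_erase_of_mem hbmem] at this
      omega
    -- Z ⊆ (U ∪ U')ᶜ of size n+1
    have hZex : n + 1 ≤ (U ∪ U')ᶜ.card := by
      have h1 := hcompl (U ∪ U')
      have h2 : (U ∪ U').card ≤ n + 2 := by
        have : U ∪ U' ⊆ insert a U := by
          intro x hx
          rcases Finset.mem_union.mp hx with hx | hx
          · exact Finset.mem_insert_of_mem hx
          · rcases Finset.mem_insert.mp hx with rfl | hx
            · exact Finset.mem_insert_self _ _
            · exact Finset.mem_insert_of_mem (Finset.mem_of_mem_erase hx)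
        have := Finset.card_le_card this
        have := Finset.card_insert_le a U
        omega
      omega
    obtain ⟨Z, hZsub, hZcard⟩ := Finset.exists_subset_card_eq hZex
    have hZU : Disjoint Z U := by
      refine Finset.disjoint_left.mpr fun x hx hx' => ?_
      exact Finset.mem_compl.mp (hZsub hx) (Finset.mem_union_left _ hx')
    have hZU' : Disjoint Z U' := by
      refine Finset.disjoint_left.mpr fun x hx hx' => ?_
      exact Finset.mem_compl.mp (hZsub hx) (Finset.mem_union_right _ hx')
    have hQU' : ∀ w : KV M n, Disjoint w.1 U' → w ∈ S := fun w hw => ih U' hU'card hU'B w hw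
    have hQZ : ∀ w : KV M n, Disjoint w.1 Z → w ∈ S := spreadD hS hn hQU' hZcard hZU'
    exact spreadD hS hn hQZ hU hZU.symm w hw

end KneserAux
end Spread
section Hull2
namespace KneserAux
open SimpleGraph Finset

/-- For `k ≥ 3`, two vertices sharing `n-1` elements form a geodetic hull set. -/
lemma hull2 (n k : ℕ) (hn : 2 ≤ n) (hk : 3 ≤ k) :
    ∃ W : Set (KV (2 * n + k) n), IsGeodHullSet (KneserGraph (2 * n + k) n) W ∧ W.ncard = 2 := by
  set M := 2 * n + k with hMdef
  have hlt : ∀ m' ∈ Finset.range (n + 1), m' < M := by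
    intro m' hm'; simp [Finset.mem_range] at hm'; omega
  have hltu : ∀ m' ∈ Finset.range n, m' < M := fun m' hm' =>
    hlt m' (Finset.mem_range.mpr (by simp [Finset.mem_range] at hm'; omega))
  have hltv : ∀ m' ∈ insert n (Finset.range (n - 1)), m' < M := by
    intro m' hm'
    rcases Finset.mem_insert.mp hm' with rfl | hm'
    · omega
    · simp [Finset.mem_range] at hm'; omega
  set u0 : KV M n := ⟨(Finset.range n).attachFin hltu, by rw [Finset.card_attachFin]; simp⟩
  set v0 : KV M n := ⟨(insert n (Finset.range (n - 1))).attachFin hltv, by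
    rw [Finset.card_attachFin, Finset.card_insert_of_notMem (by simp), Finset.card_range]; omega⟩
  have hne : u0 ≠ v0 := by
    intro h
    have hmem : (⟨n, by omega⟩ : Fin M) ∈ v0.1 := by
      simp only [v0, Finset.mem_attachFin]
      exact Finset.mem_insert_self _ _
    rw [← h] at hmem
    simp only [u0, Finset.mem_attachFin, Finset.mem_range] at hmem
    omega
  have hnd : ¬ Disjoint u0.1 v0.1 := by
    apply Finset.not_disjoint_iff.mpr
    refine ⟨⟨0, by omega⟩, ?_, ?_⟩
    · simp only [u0, Finset.mem_attachFin, Finset.mem_range]; omega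
    · simp only [v0, Finset.mem_attachFin]
      exact Finset.mem_insert_of_mem (Finset.mem_range.mpr (by omega))
  have hBcard : (u0.1 ∪ v0.1).card = n + 1 := by
    have : u0.1 ∪ v0.1 = (Finset.range (n + 1)).attachFin hlt := by
      ext x
      simp only [Finset.mem_union, u0, v0, Finset.mem_attachFin, Finset.mem_range,
        Finset.mem_insert]
      constructor
      · rintro (h | h)
        · omega
        · rcases h with h | h <;> omega
      · intro h
        by_cases hx : (x : ℕ) < n
        · left; exact hx
        · right; left
          omega
    rw [this, Finset.card_attachFin]; simp
  refine ⟨{u0, v0}, ?_, Set.ncard_pair hne⟩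
  rw [IsGeodHullSet, geodHull, Set.eq_univ_iff_forall]
  intro x
  rw [Set.mem_sInter]
  rintro C ⟨hC, hWC⟩
  have hu0 : u0 ∈ C := hWC (Set.mem_insert _ _)
  have hv0 : v0 ∈ C := hWC (Set.mem_insert_of_mem _ rfl)
  have hbase : ∀ w : KV M n, Disjoint w.1 (u0.1 ∪ v0.1) → w ∈ C :=
    stepP hC hu0 hv0 hnd hne (by omega)
  have hall := allQ rfl hC hn hk hBcard hbase
  -- choose U disjoint from x
  have hUex : n + 1 ≤ (x.1)ᶜ.card := by
    rw [Finset.card_compl, Fintype.card_fin, x.2]; omega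
  obtain ⟨U, hUsub, hUcard⟩ := Finset.exists_subset_card_eq hUex
  apply hall U hUcard x
  refine Finset.disjoint_left.mpr fun a hax haU => ?_
  exact Finset.mem_compl.mp (hUsub haU) hax

/-- For `k ≥ 3` the geodetic hull number is at most 2. -/
lemma ghn_le_two (n k : ℕ) (hn : 2 ≤ n) (hk : 3 ≤ k) :
    geodHullNumber (KneserGraph (2 * n + k) n) ≤ 2 := by
  obtain ⟨W, hW, hcard⟩ := hull2 n k hn hk
  exact Nat.sInf_le ⟨W, hW, hcard⟩

end KneserAux
end Hull2
section Conv
namespace KneserAux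
open SimpleGraph Finset

variable {M n : ℕ}

lemma common (hn : 1 ≤ n) (hM : 3 * n - 1 ≤ M) {x y : KV M n}
    (hnd : ¬ Disjoint x.1 y.1) (hne : x ≠ y) :
    ∃ z : KV M n, (KneserGraph M n).Adj x z ∧ (KneserGraph M n).Adj z y := by
  have hcard : n ≤ (x.1 ∪ y.1)ᶜ.card := by
    have h1 : (x.1 ∪ y.1).card ≤ 2 * n - 1 := by
      have hinter : 1 ≤ (x.1 ∩ y.1).card := by
        rcases Finset.not_disjoint_iff.mp hnd with ⟨a, ha1, ha2⟩
        exact Finset.card_pos.mpr ⟨a, Finset.mem_inter.mpr ⟨ha1, ha2⟩⟩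
      have := Finset.card_inter_add_card_union x.1 y.1
      have := x.2; have := y.2
      omega
    have h2 := Finset.card_compl (x.1 ∪ y.1)
    have h4 : Fintype.card (Fin M) = M := Fintype.card_fin M
    omega
  obtain ⟨t, ht, htc⟩ := Finset.exists_subset_card_eq hcard
  have hdx : Disjoint t x.1 := Finset.disjoint_left.mpr fun a hat hax =>
    Finset.mem_compl.mp (ht hat) (Finset.mem_union_left _ hax)
  have hdy : Disjoint t y.1 := Finset.disjoint_left.mpr fun a hat hay =>
    Finset.mem_compl.mp (ht hat) (Finset.mem_union_right _ hay)
  have htne : t.Nonempty := Finset.card_pos.mp (by omega)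
  obtain ⟨a, ha⟩ := htne
  refine ⟨⟨t, htc⟩, ⟨hdx.symm, fun h => ?_⟩, ⟨hdy, fun h => ?_⟩⟩
  · exact Finset.disjoint_left.mp hdx ha (by rw [h]; exact ha)
  · exact Finset.disjoint_left.mp hdy ha (by rw [← h]; exact ha)

lemma reachable' (hn : 1 ≤ n) (hM : 3 * n - 1 ≤ M) (u v : KV M n) :
    (KneserGraph M n).Reachable u v := by
  by_cases he : u = v
  · exact he ▸ Reachable.refl u
  by_cases hd : Disjoint u.1 v.1
  · exact (Adj.reachable ⟨hd, he⟩)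
  obtain ⟨z, h1, h2⟩ := common hn hM hd he
  exact h1.reachable.trans h2.reachable

lemma int_self (hn : 1 ≤ n) (hM : 3 * n - 1 ≤ M) {x w : KV M n}
    (hw : w ∈ geodInterval (KneserGraph M n) x x) : w = x := by
  have h : (KneserGraph M n).dist x w + (KneserGraph M n).dist w x = (KneserGraph M n).dist x x := hw
  rw [SimpleGraph.dist_self] at h
  have h0 : (KneserGraph M n).dist x w = 0 := by omega
  rcases SimpleGraph.dist_eq_zero_iff_eq_or_not_reachable.mp h0 with h' | h'
  · exact h'.symm
  · exact absurd (reachable' hn hM x w) h'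

lemma int_adj (hn : 1 ≤ n) (hM : 3 * n - 1 ≤ M) {x y w : KV M n}
    (hxy : (KneserGraph M n).Adj x y)
    (hw : w ∈ geodInterval (KneserGraph M n) x y) : w = x ∨ w = y := by
  have h : (KneserGraph M n).dist x w + (KneserGraph M n).dist w y = (KneserGraph M n).dist x y := hw
  rw [SimpleGraph.dist_eq_one_iff_adj.mpr hxy] at h
  rcases Nat.le_one_iff_eq_zero_or_eq_one.mp
    (show (KneserGraph M n).dist x w ≤ 1 by omega) with h0 | h1
  · left
    rcases SimpleGraph.dist_eq_zero_iff_eq_or_not_reachable.mp h0 with h' | h'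
    · exact h'.symm
    · exact absurd (reachable' hn hM x w) h'
  · right
    have h0 : (KneserGraph M n).dist w y = 0 := by omega
    rcases SimpleGraph.dist_eq_zero_iff_eq_or_not_reachable.mp h0 with h' | h'
    · exact h'
    · exact absurd (reachable' hn hM w y) h'

lemma int_two (hn : 1 ≤ n) (hM : 3 * n - 1 ≤ M) {x y w : KV M n}
    (hnd : ¬ Disjoint x.1 y.1) (hne : x ≠ y)
    (hw : w ∈ geodInterval (KneserGraph M n) x y) :
    w = x ∨ w = y ∨ Disjoint w.1 (x.1 ∪ y.1) := by
  obtain ⟨z, h1, h2⟩ := common hn hM hnd hne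
  have hdist : (KneserGraph M n).dist x y = 2 := dist_eq_two hn hnd hne h1 h2
  have h : (KneserGraph M n).dist x w + (KneserGraph M n).dist w y = (KneserGraph M n).dist x y := hw
  rw [hdist] at h
  by_cases h0 : (KneserGraph M n).dist x w = 0
  · left
    rcases SimpleGraph.dist_eq_zero_iff_eq_or_not_reachable.mp h0 with h' | h'
    · exact h'.symm
    · exact absurd (reachable' hn hM x w) h'
  by_cases h0' : (KneserGraph M n).dist w y = 0
  · right; left
    rcases SimpleGraph.dist_eq_zero_iff_eq_or_not_reachable.mp h0' with h' | h'
    · exact h'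
    · exact absurd (reachable' hn hM w y) h'
  · right; right
    have hxw : (KneserGraph M n).dist x w = 1 := by omega
    have hwy : (KneserGraph M n).dist w y = 1 := by omega
    have a1 := (SimpleGraph.dist_eq_one_iff_adj.mp hxw).1
    have a2 := (SimpleGraph.dist_eq_one_iff_adj.mp hwy).1
    exact Finset.disjoint_union_right.mpr ⟨a1.symm, a2⟩

lemma mem_geodIntervalSet_iff {V : Type*} {G : SimpleGraph V} {W : Set V} {x : V} :
    x ∈ geodIntervalSet G W ↔ ∃ u ∈ W, ∃ v ∈ W, x ∈ geodInterval G u v := by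
  simp [geodIntervalSet]

lemma supset_geodIntervalSet {V : Type*} {G : SimpleGraph V} {W : Set V} :
    W ⊆ geodIntervalSet G W := by
  intro x hx
  exact mem_geodIntervalSet_iff.mpr ⟨x, hx, x, hx, by
    show G.dist x x + G.dist x x = G.dist x x
    simp [SimpleGraph.dist_self]⟩

/-- Singletons are convex. -/
lemma conv_single (hn : 1 ≤ n) (hM : 3 * n - 1 ≤ M) (x : KV M n) :
    IsGConvex (KneserGraph M n) {x} := by
  apply Set.Subset.antisymm _ supset_geodIntervalSet
  intro w hw
  obtain ⟨u, hu, v, hv, hw⟩ := mem_geodIntervalSet_iff.mp hw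
  have hu' : u = x := hu
  have hv' : v = x := hv
  rw [hu', hv'] at hw
  exact int_self hn hM hw

/-- The empty set is convex. -/
lemma conv_empty : IsGConvex (KneserGraph M n) (∅ : Set (KV M n)) := by
  apply Set.Subset.antisymm _ supset_geodIntervalSet
  intro w hw
  obtain ⟨u, hu, -⟩ := mem_geodIntervalSet_iff.mp hw
  exact absurd hu (Set.notMem_empty u)

/-- A pair of adjacent vertices is convex. -/
lemma conv_pair_adj (hn : 1 ≤ n) (hM : 3 * n - 1 ≤ M) {x y : KV M n}
    (hxy : (KneserGraph M n).Adj x y) :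
    IsGConvex (KneserGraph M n) {x, y} := by
  apply Set.Subset.antisymm _ supset_geodIntervalSet
  intro w hw
  obtain ⟨u, hu, v, hv, hw⟩ := mem_geodIntervalSet_iff.mp hw
  have hu' : u = x ∨ u = y := hu
  have hv' : v = x ∨ v = y := hv
  rcases hu' with hu' | hu' <;> rcases hv' with hv' | hv' <;> rw [hu', hv'] at hw
  · exact Or.inl (int_self hn hM hw)
  · rcases int_adj hn hM hxy hw with h | h
    · exact Or.inl h
    · exact Or.inr h
  · rcases int_adj hn hM hxy.symm hw with h | h
    · exact Or.inr h
    · exact Or.inl h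
  · exact Or.inr (int_self hn hM hw)

/-- When the complement of `x ∪ y` has exactly `n` elements, `{x, y, z}` is convex,
where `z` is the complement. -/
lemma conv1 (hn : 1 ≤ n) (hM : 3 * n - 1 ≤ M) {x y : KV M n}
    (hnd : ¬ Disjoint x.1 y.1) (hne : x ≠ y) (hc : ((x.1 ∪ y.1)ᶜ).card = n) :
    IsGConvex (KneserGraph M n) {x, y, ⟨(x.1 ∪ y.1)ᶜ, hc⟩} := by
  set z : KV M n := ⟨(x.1 ∪ y.1)ᶜ, hc⟩ with hzdef
  have hxz : (KneserGraph M n).Adj x z := by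
    have hd : Disjoint x.1 z.1 := Finset.disjoint_left.mpr fun a ha h =>
      Finset.mem_compl.mp h (Finset.mem_union_left _ ha)
    refine ⟨hd, fun h => ?_⟩
    obtain ⟨a, ha⟩ := Finset.card_pos.mp (show 0 < x.1.card by rw [x.2]; omega)
    exact Finset.disjoint_left.mp hd ha (by rw [← h]; exact ha)
  have hyz : (KneserGraph M n).Adj y z := by
    have hd : Disjoint y.1 z.1 := Finset.disjoint_left.mpr fun a ha h =>
      Finset.mem_compl.mp h (Finset.mem_union_right _ ha)
    refine ⟨hd, fun h => ?_⟩
    obtain ⟨a, ha⟩ := Finset.card_pos.mp (show 0 < y.1.card by rw [y.2]; omega)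
    exact Finset.disjoint_left.mp hd ha (by rw [← h]; exact ha)
  have mx : x ∈ ({x, y, z} : Set (KV M n)) := Set.mem_insert _ _
  have my : y ∈ ({x, y, z} : Set (KV M n)) := Set.mem_insert_of_mem _ (Set.mem_insert _ _)
  have mz : z ∈ ({x, y, z} : Set (KV M n)) :=
    Set.mem_insert_of_mem _ (Set.mem_insert_of_mem _ rfl)
  apply Set.Subset.antisymm _ supset_geodIntervalSet
  intro w hw
  obtain ⟨u, hu, v, hv, hw⟩ := mem_geodIntervalSet_iff.mp hw
  have hzcase : ∀ h : Disjoint w.1 (x.1 ∪ y.1), w = z := by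
    intro h
    have hsub : w.1 ⊆ (x.1 ∪ y.1)ᶜ := fun a haw =>
      Finset.mem_compl.mpr (fun hmem => Finset.disjoint_left.mp h haw hmem)
    have : w.1 = (x.1 ∪ y.1)ᶜ :=
      Finset.eq_of_subset_of_card_le hsub (by rw [hc, w.2])
    exact Subtype.ext this
  have case_xy : w ∈ geodInterval (KneserGraph M n) x y → w ∈ ({x, y, z} : Set (KV M n)) := by
    intro hw
    rcases int_two hn hM hnd hne hw with h | h | h
    · rw [h]; exact mx
    · rw [h]; exact my
    · rw [hzcase h]; exact mz
  have case_yx : w ∈ geodInterval (KneserGraph M n) y x → w ∈ ({x, y, z} : Set (KV M n)) := by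
    intro hw
    rcases int_two hn hM (fun h => hnd h.symm) (Ne.symm hne) hw with h | h | h
    · rw [h]; exact my
    · rw [h]; exact mx
    · rw [hzcase (by rwa [Finset.union_comm])]; exact mz
  have case_adj : ∀ {a b : KV M n}, (KneserGraph M n).Adj a b →
      a ∈ ({x, y, z} : Set (KV M n)) → b ∈ ({x, y, z} : Set (KV M n)) →
      w ∈ geodInterval (KneserGraph M n) a b → w ∈ ({x, y, z} : Set (KV M n)) := by
    intro a b hab ha hb hw
    rcases int_adj hn hM hab hw with h | h
    · rw [h]; exact ha
    · rw [h]; exact hb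
  have hu' : u = x ∨ u = y ∨ u = z := hu
  have hv' : v = x ∨ v = y ∨ v = z := hv
  rcases hu' with hu' | hu' | hu' <;> rcases hv' with hv' | hv' | hv' <;> rw [hu', hv'] at hw
  · rw [int_self hn hM hw]; exact mx
  · exact case_xy hw
  · exact case_adj hxz mx mz hw
  · exact case_yx hw
  · rw [int_self hn hM hw]; exact my
  · exact case_adj hyz my mz hw
  · exact case_adj hxz.symm mz mx hw
  · exact case_adj hyz.symm mz my hw
  · rw [int_self hn hM hw]; exact mz

/-- Interval between two distinct vertices inside a side `E` of size `n+1`. -/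
lemma sameSide (hn : 2 ≤ n) (hM : 3 * n - 1 ≤ M) {E : Finset (Fin M)} (hE : E.card = n + 1)
    {x y w : KV M n} (hx : x.1 ⊆ E) (hy : y.1 ⊆ E) (hne : x ≠ y)
    (hw : w ∈ geodInterval (KneserGraph M n) x y) :
    w = x ∨ w = y ∨ Disjoint w.1 E := by
  have huni : x.1 ∪ y.1 = E := by
    have hsub : x.1 ∪ y.1 ⊆ E := Finset.union_subset hx hy
    have hge : E.card ≤ (x.1 ∪ y.1).card := by
      by_contra hlt
      push_neg at hlt
      have hxle : x.1 = x.1 ∪ y.1 :=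
        Finset.eq_of_subset_of_card_le Finset.subset_union_left (by rw [x.2]; omega)
      have hyle : y.1 = x.1 ∪ y.1 :=
        Finset.eq_of_subset_of_card_le Finset.subset_union_right (by rw [y.2]; omega)
      exact hne (Subtype.ext (hxle.trans hyle.symm))
    exact Finset.eq_of_subset_of_card_le hsub hge
  have hnd : ¬ Disjoint x.1 y.1 := by
    intro hd
    have := Finset.card_union_of_disjoint hd
    rw [huni, x.2, y.2, hE] at this
    omega
  rcases int_two (by omega) hM hnd hne hw with h | h | h
  · exact Or.inl h
  · exact Or.inr (Or.inl h)
  · exact Or.inr (Or.inr (by rwa [huni] at h))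

/-- When `|D| = |Dᶜ| = n+1`, the set of vertices contained in `D` or in `Dᶜ` is convex. -/
lemma conv2 (hn : 2 ≤ n) (hM : 3 * n - 1 ≤ M) {D : Finset (Fin M)}
    (hD : D.card = n + 1) (hDc : Dᶜ.card = n + 1) :
    IsGConvex (KneserGraph M n) {w : KV M n | w.1 ⊆ D ∨ w.1 ⊆ Dᶜ} := by
  set C : Set (KV M n) := {w : KV M n | w.1 ⊆ D ∨ w.1 ⊆ Dᶜ} with hCdef
  apply Set.Subset.antisymm _ supset_geodIntervalSet
  intro w hw
  obtain ⟨u, hu, v, hv, hw⟩ := mem_geodIntervalSet_iff.mp hw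
  have hdisjsub : ∀ {s : Finset (Fin M)} {E : Finset (Fin M)}, Disjoint s E → s ⊆ Eᶜ :=
    fun h => fun a ha => Finset.mem_compl.mpr (fun hmem => Finset.disjoint_left.mp h ha hmem)
  by_cases huv : u = v
  · rw [huv] at hw
    rw [int_self (by omega : 1 ≤ n) hM hw]
    rwa [huv] at hu
  have hmixed : ∀ {a b : KV M n}, a.1 ⊆ D → b.1 ⊆ Dᶜ → (KneserGraph M n).Adj a b := by
    intro a b ha hb
    have hd : Disjoint a.1 b.1 := Finset.disjoint_left.mpr fun c hc hcb =>
      Finset.mem_compl.mp (hb hcb) (ha hc)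
    refine ⟨hd, fun h => ?_⟩
    obtain ⟨c, hcmem⟩ := Finset.card_pos.mp (show 0 < a.1.card by rw [a.2]; omega)
    exact Finset.disjoint_left.mp hd hcmem (by rw [← h]; exact hcmem)
  have hadj : ∀ {a b : KV M n}, (KneserGraph M n).Adj a b → a ∈ C → b ∈ C →
      w ∈ geodInterval (KneserGraph M n) a b → w ∈ C := by
    intro a b hab ha hb hw
    rcases int_adj (by omega : 1 ≤ n) hM hab hw with h | h
    · rw [h]; exact ha
    · rw [h]; exact hb
  rcases hu with hu | hu <;> rcases hv with hv | hv
  · rcases sameSide hn hM hD hu hv huv hw with h | h | h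
    · rw [h]; exact Or.inl hu
    · rw [h]; exact Or.inl hv
    · exact Or.inr (hdisjsub h)
  · exact hadj (hmixed hu hv) (Or.inl hu) (Or.inr hv) hw
  · exact hadj (hmixed hv hu).symm (Or.inr hu) (Or.inl hv) hw
  · rcases sameSide hn hM hDc hu hv huv hw with h | h | h
    · rw [h]; exact Or.inr hu
    · rw [h]; exact Or.inr hv
    · refine Or.inl ?_
      have := hdisjsub h
      rwa [compl_compl] at this

end KneserAux
end Conv
section Pos
set_option maxRecDepth 4000
open SimpleGraph Finset

lemma hull52 : IsGeodHullSet (KneserGraph 5 2)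
    {(⟨{0, 1}, by decide⟩ : KV 5 2), ⟨{0, 2}, by decide⟩, ⟨{0, 3}, by decide⟩} := by
  rw [IsGeodHullSet, geodHull, Set.eq_univ_iff_forall]
  intro x
  rw [Set.mem_sInter]
  rintro C ⟨hC, hWC⟩
  have h01 : (⟨{0, 1}, by decide⟩ : KV 5 2) ∈ C := hWC (Set.mem_insert _ _)
  have h02 : (⟨{0, 2}, by decide⟩ : KV 5 2) ∈ C := hWC (Set.mem_insert_of_mem _ (Set.mem_insert _ _))
  have h03 : (⟨{0, 3}, by decide⟩ : KV 5 2) ∈ C := hWC (Set.mem_insert_of_mem _ (Set.mem_insert_of_mem _ rfl))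
  have h14 : (⟨{1, 4}, by decide⟩ : KV 5 2) ∈ C := KneserAux.stepP hC h02 h03 (by decide) (by decide) (by decide) _ (by decide)
  have h23 : (⟨{2, 3}, by decide⟩ : KV 5 2) ∈ C := KneserAux.stepP hC h01 h14 (by decide) (by decide) (by decide) _ (by decide)
  have h24 : (⟨{2, 4}, by decide⟩ : KV 5 2) ∈ C := KneserAux.stepP hC h01 h03 (by decide) (by decide) (by decide) _ (by decide)
  have h34 : (⟨{3, 4}, by decide⟩ : KV 5 2) ∈ C := KneserAux.stepP hC h01 h02 (by decide) (by decide) (by decide) _ (by decide)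
  have h12 : (⟨{1, 2}, by decide⟩ : KV 5 2) ∈ C := KneserAux.stepP hC h03 h34 (by decide) (by decide) (by decide) _ (by decide)
  have h13 : (⟨{1, 3}, by decide⟩ : KV 5 2) ∈ C := KneserAux.stepP hC h02 h24 (by decide) (by decide) (by decide) _ (by decide)
  have h04 : (⟨{0, 4}, by decide⟩ : KV 5 2) ∈ C := KneserAux.stepP hC h23 h12 (by decide) (by decide) (by decide) _ (by decide)
  obtain ⟨s, hs⟩ := x
  have hcases : s ∈ ([{0, 1}, {0, 2}, {0, 3}, {0, 4}, {1, 2}, {1, 3}, {1, 4}, {2, 3}, {2, 4}, {3, 4}] : List (Finset (Fin 5))) := by revert hs; revert s; decide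
  simp only [List.mem_cons, List.not_mem_nil, or_false] at hcases
  rcases hcases with rfl|rfl|rfl|rfl|rfl|rfl|rfl|rfl|rfl|rfl
  · exact h01
  · exact h02
  · exact h03
  · exact h04
  · exact h12
  · exact h13
  · exact h14
  · exact h23
  · exact h24
  · exact h34

lemma hull62 : IsGeodHullSet (KneserGraph 6 2)
    {(⟨{0, 1}, by decide⟩ : KV 6 2), ⟨{0, 2}, by decide⟩, ⟨{0, 3}, by decide⟩} := by
  rw [IsGeodHullSet, geodHull, Set.eq_univ_iff_forall]
  intro x
  rw [Set.mem_sInter]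
  rintro C ⟨hC, hWC⟩
  have h01 : (⟨{0, 1}, by decide⟩ : KV 6 2) ∈ C := hWC (Set.mem_insert _ _)
  have h02 : (⟨{0, 2}, by decide⟩ : KV 6 2) ∈ C := hWC (Set.mem_insert_of_mem _ (Set.mem_insert _ _))
  have h03 : (⟨{0, 3}, by decide⟩ : KV 6 2) ∈ C := hWC (Set.mem_insert_of_mem _ (Set.mem_insert_of_mem _ rfl))
  have h14 : (⟨{1, 4}, by decide⟩ : KV 6 2) ∈ C := KneserAux.stepP hC h02 h03 (by decide) (by decide) (by decide) _ (by decide)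
  have h15 : (⟨{1, 5}, by decide⟩ : KV 6 2) ∈ C := KneserAux.stepP hC h02 h03 (by decide) (by decide) (by decide) _ (by decide)
  have h23 : (⟨{2, 3}, by decide⟩ : KV 6 2) ∈ C := KneserAux.stepP hC h01 h14 (by decide) (by decide) (by decide) _ (by decide)
  have h24 : (⟨{2, 4}, by decide⟩ : KV 6 2) ∈ C := KneserAux.stepP hC h01 h03 (by decide) (by decide) (by decide) _ (by decide)
  have h25 : (⟨{2, 5}, by decide⟩ : KV 6 2) ∈ C := KneserAux.stepP hC h01 h03 (by decide) (by decide) (by decide) _ (by decide)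
  have h34 : (⟨{3, 4}, by decide⟩ : KV 6 2) ∈ C := KneserAux.stepP hC h01 h02 (by decide) (by decide) (by decide) _ (by decide)
  have h35 : (⟨{3, 5}, by decide⟩ : KV 6 2) ∈ C := KneserAux.stepP hC h01 h02 (by decide) (by decide) (by decide) _ (by decide)
  have h45 : (⟨{4, 5}, by decide⟩ : KV 6 2) ∈ C := KneserAux.stepP hC h01 h02 (by decide) (by decide) (by decide) _ (by decide)
  have h04 : (⟨{0, 4}, by decide⟩ : KV 6 2) ∈ C := KneserAux.stepP hC h15 h25 (by decide) (by decide) (by decide) _ (by decide)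
  have h05 : (⟨{0, 5}, by decide⟩ : KV 6 2) ∈ C := KneserAux.stepP hC h14 h24 (by decide) (by decide) (by decide) _ (by decide)
  have h12 : (⟨{1, 2}, by decide⟩ : KV 6 2) ∈ C := KneserAux.stepP hC h03 h34 (by decide) (by decide) (by decide) _ (by decide)
  have h13 : (⟨{1, 3}, by decide⟩ : KV 6 2) ∈ C := KneserAux.stepP hC h02 h24 (by decide) (by decide) (by decide) _ (by decide)
  obtain ⟨s, hs⟩ := x
  have hcases : s ∈ ([{0, 1}, {0, 2}, {0, 3}, {0, 4}, {0, 5}, {1, 2}, {1, 3}, {1, 4}, {1, 5}, {2, 3}, {2, 4}, {2, 5}, {3, 4}, {3, 5}, {4, 5}] : List (Finset (Fin 6))) := by revert hs; revert s; decide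
  simp only [List.mem_cons, List.not_mem_nil, or_false] at hcases
  rcases hcases with rfl|rfl|rfl|rfl|rfl|rfl|rfl|rfl|rfl|rfl|rfl|rfl|rfl|rfl|rfl
  · exact h01
  · exact h02
  · exact h03
  · exact h04
  · exact h05
  · exact h12
  · exact h13
  · exact h14
  · exact h15
  · exact h23
  · exact h24
  · exact h25
  · exact h34
  · exact h35
  · exact h45

lemma hull83 : IsGeodHullSet (KneserGraph 8 3)
    {(⟨{0, 1, 2}, by decide⟩ : KV 8 3), ⟨{0, 1, 3}, by decide⟩, ⟨{0, 1, 4}, by decide⟩} := by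
  rw [IsGeodHullSet, geodHull, Set.eq_univ_iff_forall]
  intro x
  rw [Set.mem_sInter]
  rintro C ⟨hC, hWC⟩
  have h012 : (⟨{0, 1, 2}, by decide⟩ : KV 8 3) ∈ C := hWC (Set.mem_insert _ _)
  have h013 : (⟨{0, 1, 3}, by decide⟩ : KV 8 3) ∈ C := hWC (Set.mem_insert_of_mem _ (Set.mem_insert _ _))
  have h014 : (⟨{0, 1, 4}, by decide⟩ : KV 8 3) ∈ C := hWC (Set.mem_insert_of_mem _ (Set.mem_insert_of_mem _ rfl))
  have h256 : (⟨{2, 5, 6}, by decide⟩ : KV 8 3) ∈ C := KneserAux.stepP hC h013 h014 (by decide) (by decide) (by decide) _ (by decide)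
  have h257 : (⟨{2, 5, 7}, by decide⟩ : KV 8 3) ∈ C := KneserAux.stepP hC h013 h014 (by decide) (by decide) (by decide) _ (by decide)
  have h267 : (⟨{2, 6, 7}, by decide⟩ : KV 8 3) ∈ C := KneserAux.stepP hC h013 h014 (by decide) (by decide) (by decide) _ (by decide)
  have h345 : (⟨{3, 4, 5}, by decide⟩ : KV 8 3) ∈ C := KneserAux.stepP hC h012 h267 (by decide) (by decide) (by decide) _ (by decide)
  have h346 : (⟨{3, 4, 6}, by decide⟩ : KV 8 3) ∈ C := KneserAux.stepP hC h012 h257 (by decide) (by decide) (by decide) _ (by decide)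
  have h347 : (⟨{3, 4, 7}, by decide⟩ : KV 8 3) ∈ C := KneserAux.stepP hC h012 h256 (by decide) (by decide) (by decide) _ (by decide)
  have h356 : (⟨{3, 5, 6}, by decide⟩ : KV 8 3) ∈ C := KneserAux.stepP hC h012 h014 (by decide) (by decide) (by decide) _ (by decide)
  have h357 : (⟨{3, 5, 7}, by decide⟩ : KV 8 3) ∈ C := KneserAux.stepP hC h012 h014 (by decide) (by decide) (by decide) _ (by decide)
  have h367 : (⟨{3, 6, 7}, by decide⟩ : KV 8 3) ∈ C := KneserAux.stepP hC h012 h014 (by decide) (by decide) (by decide) _ (by decide)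
  have h456 : (⟨{4, 5, 6}, by decide⟩ : KV 8 3) ∈ C := KneserAux.stepP hC h012 h013 (by decide) (by decide) (by decide) _ (by decide)
  have h457 : (⟨{4, 5, 7}, by decide⟩ : KV 8 3) ∈ C := KneserAux.stepP hC h012 h013 (by decide) (by decide) (by decide) _ (by decide)
  have h467 : (⟨{4, 6, 7}, by decide⟩ : KV 8 3) ∈ C := KneserAux.stepP hC h012 h013 (by decide) (by decide) (by decide) _ (by decide)
  have h567 : (⟨{5, 6, 7}, by decide⟩ : KV 8 3) ∈ C := KneserAux.stepP hC h012 h013 (by decide) (by decide) (by decide) _ (by decide)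
  have h015 : (⟨{0, 1, 5}, by decide⟩ : KV 8 3) ∈ C := KneserAux.stepP hC h267 h346 (by decide) (by decide) (by decide) _ (by decide)
  have h016 : (⟨{0, 1, 6}, by decide⟩ : KV 8 3) ∈ C := KneserAux.stepP hC h257 h345 (by decide) (by decide) (by decide) _ (by decide)
  have h017 : (⟨{0, 1, 7}, by decide⟩ : KV 8 3) ∈ C := KneserAux.stepP hC h256 h345 (by decide) (by decide) (by decide) _ (by decide)
  have h023 : (⟨{0, 2, 3}, by decide⟩ : KV 8 3) ∈ C := KneserAux.stepP hC h456 h457 (by decide) (by decide) (by decide) _ (by decide)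
  have h024 : (⟨{0, 2, 4}, by decide⟩ : KV 8 3) ∈ C := KneserAux.stepP hC h356 h357 (by decide) (by decide) (by decide) _ (by decide)
  have h025 : (⟨{0, 2, 5}, by decide⟩ : KV 8 3) ∈ C := KneserAux.stepP hC h346 h347 (by decide) (by decide) (by decide) _ (by decide)
  have h026 : (⟨{0, 2, 6}, by decide⟩ : KV 8 3) ∈ C := KneserAux.stepP hC h345 h347 (by decide) (by decide) (by decide) _ (by decide)
  have h027 : (⟨{0, 2, 7}, by decide⟩ : KV 8 3) ∈ C := KneserAux.stepP hC h345 h346 (by decide) (by decide) (by decide) _ (by decide)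
  have h034 : (⟨{0, 3, 4}, by decide⟩ : KV 8 3) ∈ C := KneserAux.stepP hC h256 h257 (by decide) (by decide) (by decide) _ (by decide)
  have h035 : (⟨{0, 3, 5}, by decide⟩ : KV 8 3) ∈ C := KneserAux.stepP hC h267 h467 (by decide) (by decide) (by decide) _ (by decide)
  have h036 : (⟨{0, 3, 6}, by decide⟩ : KV 8 3) ∈ C := KneserAux.stepP hC h257 h457 (by decide) (by decide) (by decide) _ (by decide)
  have h037 : (⟨{0, 3, 7}, by decide⟩ : KV 8 3) ∈ C := KneserAux.stepP hC h256 h456 (by decide) (by decide) (by decide) _ (by decide)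
  have h045 : (⟨{0, 4, 5}, by decide⟩ : KV 8 3) ∈ C := KneserAux.stepP hC h267 h367 (by decide) (by decide) (by decide) _ (by decide)
  have h046 : (⟨{0, 4, 6}, by decide⟩ : KV 8 3) ∈ C := KneserAux.stepP hC h257 h357 (by decide) (by decide) (by decide) _ (by decide)
  have h047 : (⟨{0, 4, 7}, by decide⟩ : KV 8 3) ∈ C := KneserAux.stepP hC h256 h356 (by decide) (by decide) (by decide) _ (by decide)
  have h123 : (⟨{1, 2, 3}, by decide⟩ : KV 8 3) ∈ C := KneserAux.stepP hC h456 h457 (by decide) (by decide) (by decide) _ (by decide)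
  have h124 : (⟨{1, 2, 4}, by decide⟩ : KV 8 3) ∈ C := KneserAux.stepP hC h356 h357 (by decide) (by decide) (by decide) _ (by decide)
  have h125 : (⟨{1, 2, 5}, by decide⟩ : KV 8 3) ∈ C := KneserAux.stepP hC h346 h347 (by decide) (by decide) (by decide) _ (by decide)
  have h126 : (⟨{1, 2, 6}, by decide⟩ : KV 8 3) ∈ C := KneserAux.stepP hC h345 h347 (by decide) (by decide) (by decide) _ (by decide)
  have h127 : (⟨{1, 2, 7}, by decide⟩ : KV 8 3) ∈ C := KneserAux.stepP hC h345 h346 (by decide) (by decide) (by decide) _ (by decide)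
  have h134 : (⟨{1, 3, 4}, by decide⟩ : KV 8 3) ∈ C := KneserAux.stepP hC h256 h257 (by decide) (by decide) (by decide) _ (by decide)
  have h135 : (⟨{1, 3, 5}, by decide⟩ : KV 8 3) ∈ C := KneserAux.stepP hC h267 h467 (by decide) (by decide) (by decide) _ (by decide)
  have h136 : (⟨{1, 3, 6}, by decide⟩ : KV 8 3) ∈ C := KneserAux.stepP hC h257 h457 (by decide) (by decide) (by decide) _ (by decide)
  have h137 : (⟨{1, 3, 7}, by decide⟩ : KV 8 3) ∈ C := KneserAux.stepP hC h256 h456 (by decide) (by decide) (by decide) _ (by decide)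
  have h145 : (⟨{1, 4, 5}, by decide⟩ : KV 8 3) ∈ C := KneserAux.stepP hC h267 h367 (by decide) (by decide) (by decide) _ (by decide)
  have h146 : (⟨{1, 4, 6}, by decide⟩ : KV 8 3) ∈ C := KneserAux.stepP hC h257 h357 (by decide) (by decide) (by decide) _ (by decide)
  have h147 : (⟨{1, 4, 7}, by decide⟩ : KV 8 3) ∈ C := KneserAux.stepP hC h256 h356 (by decide) (by decide) (by decide) _ (by decide)
  have h156 : (⟨{1, 5, 6}, by decide⟩ : KV 8 3) ∈ C := KneserAux.stepP hC h347 h023 (by decide) (by decide) (by decide) _ (by decide)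
  have h157 : (⟨{1, 5, 7}, by decide⟩ : KV 8 3) ∈ C := KneserAux.stepP hC h346 h023 (by decide) (by decide) (by decide) _ (by decide)
  have h167 : (⟨{1, 6, 7}, by decide⟩ : KV 8 3) ∈ C := KneserAux.stepP hC h345 h023 (by decide) (by decide) (by decide) _ (by decide)
  have h234 : (⟨{2, 3, 4}, by decide⟩ : KV 8 3) ∈ C := KneserAux.stepP hC h567 h015 (by decide) (by decide) (by decide) _ (by decide)
  have h235 : (⟨{2, 3, 5}, by decide⟩ : KV 8 3) ∈ C := KneserAux.stepP hC h014 h467 (by decide) (by decide) (by decide) _ (by decide)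
  have h236 : (⟨{2, 3, 6}, by decide⟩ : KV 8 3) ∈ C := KneserAux.stepP hC h014 h457 (by decide) (by decide) (by decide) _ (by decide)
  have h237 : (⟨{2, 3, 7}, by decide⟩ : KV 8 3) ∈ C := KneserAux.stepP hC h014 h456 (by decide) (by decide) (by decide) _ (by decide)
  have h245 : (⟨{2, 4, 5}, by decide⟩ : KV 8 3) ∈ C := KneserAux.stepP hC h013 h367 (by decide) (by decide) (by decide) _ (by decide)
  have h246 : (⟨{2, 4, 6}, by decide⟩ : KV 8 3) ∈ C := KneserAux.stepP hC h013 h357 (by decide) (by decide) (by decide) _ (by decide)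
  have h247 : (⟨{2, 4, 7}, by decide⟩ : KV 8 3) ∈ C := KneserAux.stepP hC h013 h356 (by decide) (by decide) (by decide) _ (by decide)
  have h056 : (⟨{0, 5, 6}, by decide⟩ : KV 8 3) ∈ C := KneserAux.stepP hC h347 h123 (by decide) (by decide) (by decide) _ (by decide)
  have h057 : (⟨{0, 5, 7}, by decide⟩ : KV 8 3) ∈ C := KneserAux.stepP hC h346 h123 (by decide) (by decide) (by decide) _ (by decide)
  have h067 : (⟨{0, 6, 7}, by decide⟩ : KV 8 3) ∈ C := KneserAux.stepP hC h345 h123 (by decide) (by decide) (by decide) _ (by decide)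
  obtain ⟨s, hs⟩ := x
  have hcases : s ∈ ([{0, 1, 2}, {0, 1, 3}, {0, 1, 4}, {0, 1, 5}, {0, 1, 6}, {0, 1, 7}, {0, 2, 3}, {0, 2, 4}, {0, 2, 5}, {0, 2, 6}, {0, 2, 7}, {0, 3, 4}, {0, 3, 5}, {0, 3, 6}, {0, 3, 7}, {0, 4, 5}, {0, 4, 6}, {0, 4, 7}, {0, 5, 6}, {0, 5, 7}, {0, 6, 7}, {1, 2, 3}, {1, 2, 4}, {1, 2, 5}, {1, 2, 6}, {1, 2, 7}, {1, 3, 4}, {1, 3, 5}, {1, 3, 6}, {1, 3, 7}, {1, 4, 5}, {1, 4, 6}, {1, 4, 7}, {1, 5, 6}, {1, 5, 7}, {1, 6, 7}, {2, 3, 4}, {2, 3, 5}, {2, 3, 6}, {2, 3, 7}, {2, 4, 5}, {2, 4, 6}, {2, 4, 7}, {2, 5, 6}, {2, 5, 7}, {2, 6, 7}, {3, 4, 5}, {3, 4, 6}, {3, 4, 7}, {3, 5, 6}, {3, 5, 7}, {3, 6, 7}, {4, 5, 6}, {4, 5, 7}, {4, 6, 7}, {5, 6, 7}] : List (Finset (Fin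 8))) := by revert hs; revert s; decide
  simp only [List.mem_cons, List.not_mem_nil, or_false] at hcases
  rcases hcases with rfl|rfl|rfl|rfl|rfl|rfl|rfl|rfl|rfl|rfl|rfl|rfl|rfl|rfl|rfl|rfl|rfl|rfl|rfl|rfl|rfl|rfl|rfl|rfl|rfl|rfl|rfl|rfl|rfl|rfl|rfl|rfl|rfl|rfl|rfl|rfl|rfl|rfl|rfl|rfl|rfl|rfl|rfl|rfl|rfl|rfl|rfl|rfl|rfl|rfl|rfl|rfl|rfl|rfl|rfl|rfl
  · exact h012
  · exact h013
  · exact h014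
  · exact h015
  · exact h016
  · exact h017
  · exact h023
  · exact h024
  · exact h025
  · exact h026
  · exact h027
  · exact h034
  · exact h035
  · exact h036
  · exact h037
  · exact h045
  · exact h046
  · exact h047
  · exact h056
  · exact h057
  · exact h067
  · exact h123
  · exact h124
  · exact h125
  · exact h126
  · exact h127
  · exact h134
  · exact h135
  · exact h136
  · exact h137
  · exact h145
  · exact h146
  · exact h147
  · exact h156
  · exact h157
  · exact h167
  · exact h234
  · exact h235
  · exact h236
  · exact h237
  · exact h245
  · exact h246
  · exact h247
  · exact h256
  · exact h257
  · exact h267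
  · exact h345
  · exact h346
  · exact h347
  · exact h356
  · exact h357
  · exact h367
  · exact h456
  · exact h457
  · exact h467
  · exact h567

end Pos
section Lower
namespace KneserAux
open SimpleGraph Finset

variable {M n : ℕ}

lemma hull_subset {V : Type*} (G : SimpleGraph V) {W C : Set V}
    (hC : IsGConvex G C) (hWC : W ⊆ C) : geodHull G W ⊆ C :=
  Set.sInter_subset_of_mem ⟨hC, hWC⟩

lemma block1 (hn : 1 ≤ n) (hM : 3 * n - 1 ≤ M) (hV : 4 ≤ Fintype.card (KV M n))
    {x y : KV M n} (hne : x ≠ y) (hnd : ¬ Disjoint x.1 y.1)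
    (hc : ((x.1 ∪ y.1)ᶜ).card = n) :
    ∃ C : Set (KV M n), IsGConvex (KneserGraph M n) C ∧ x ∈ C ∧ y ∈ C ∧ C ≠ Set.univ := by
  set z : KV M n := ⟨(x.1 ∪ y.1)ᶜ, hc⟩ with hzdef
  refine ⟨{x, y, z}, conv1 hn hM hnd hne hc,
    Set.mem_insert _ _, Set.mem_insert_of_mem _ (Set.mem_insert _ _), ?_⟩
  intro h
  have e1 := Set.ncard_insert_le x ({y, z} : Set (KV M n))
  have e2 := Set.ncard_insert_le y ({z} : Set (KV M n))
  have e3 := Set.ncard_singleton z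
  have h1 : (Set.univ : Set (KV M n)).ncard ≤ 3 := by rw [← h]; omega
  rw [Set.ncard_univ, Nat.card_eq_fintype_card] at h1
  omega

lemma block2 (hn : 2 ≤ n) (hM : 3 * n - 1 ≤ M) (hM2 : M = 2 * n + 2) {x y : KV M n}
    (hne : x ≠ y) (hnd : ¬ Disjoint x.1 y.1)
    (hc : ((x.1 ∪ y.1)ᶜ).card = n + 1) :
    ∃ C : Set (KV M n), IsGConvex (KneserGraph M n) C ∧ x ∈ C ∧ y ∈ C ∧ C ≠ Set.univ := by
  have hMcard : (Finset.univ : Finset (Fin M)).card = M := by simp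
  have hD : (x.1 ∪ y.1).card = n + 1 := by
    have h1 := Finset.card_compl (x.1 ∪ y.1)
    have h2 := Finset.card_le_univ (x.1 ∪ y.1)
    rw [Fintype.card_fin] at h1
    rw [hc] at h1
    omega
  set D := x.1 ∪ y.1 with hDdef
  refine ⟨{w : KV M n | w.1 ⊆ D ∨ w.1 ⊆ Dᶜ}, conv2 hn hM hD hc,
    Or.inl Finset.subset_union_left, Or.inl Finset.subset_union_right, ?_⟩
  -- find a vertex meeting both sides
  obtain ⟨a, ha⟩ := Finset.card_pos.mp (show 0 < D.card by omega)
  obtain ⟨b, hb⟩ := Finset.card_pos.mp (show 0 < Dᶜ.card by omega)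
  have hab : a ≠ b := fun h => Finset.mem_compl.mp hb (h ▸ ha)
  have hcard2 : ({a, b} : Finset (Fin M)).card = 2 := by
    rw [Finset.card_insert_of_notMem (by simp [hab]), Finset.card_singleton]
  obtain ⟨t, hts, htc⟩ := Finset.exists_subsuperset_card_eq (n := n)
    (Finset.subset_univ ({a, b} : Finset (Fin M))) (by rw [hcard2]; omega)
    (by rw [hMcard]; omega)
  intro h
  have hw : (⟨t, htc.2⟩ : KV M n) ∈ {w : KV M n | w.1 ⊆ D ∨ w.1 ⊆ Dᶜ} := by
    rw [h]; trivial
  rcases hw with hw | hw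
  · exact Finset.mem_compl.mp hb (hw (hts (Finset.mem_insert_of_mem (Finset.mem_singleton_self b))))
  · exact Finset.mem_compl.mp (hw (hts (Finset.mem_insert_self a _))) ha

/-- No set of at most two vertices is a hull set, given pair blockers. -/
lemma lower (hn : 2 ≤ n) (hM : 3 * n - 1 ≤ M) (hV : 4 ≤ Fintype.card (KV M n))
    (hblock : ∀ x y : KV M n, x ≠ y → ¬ Disjoint x.1 y.1 →
      ∃ C : Set (KV M n), IsGConvex (KneserGraph M n) C ∧ x ∈ C ∧ y ∈ C ∧ C ≠ Set.univ) :
    ∀ W : Set (KV M n), W.ncard ≤ 2 → ¬ IsGeodHullSet (KneserGraph M n) W := by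
  intro W hW hhull
  rw [IsGeodHullSet] at hhull
  have hfin : W.Finite := Set.toFinite W
  have huniv : ∀ C : Set (KV M n), IsGConvex (KneserGraph M n) C → W ⊆ C →
      4 ≤ (C.ncard) := by
    intro C hC hWC
    have := hull_subset (KneserGraph M n) hC hWC
    rw [hhull] at this
    have h1 := Set.ncard_le_ncard this (Set.toFinite C)
    rw [Set.ncard_univ, Nat.card_eq_fintype_card] at h1
    exact le_trans hV h1
  have h012 : W.ncard = 0 ∨ W.ncard = 1 ∨ W.ncard = 2 := by omega
  rcases h012 with h | h | h
  · have hemp : W = ∅ := (Set.ncard_eq_zero hfin).mp h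
    subst hemp
    have := huniv ∅ conv_empty (subset_refl _)
    simp at this
  · obtain ⟨a, rfl⟩ := Set.ncard_eq_one.mp h
    have := huniv {a} (conv_single (by omega) hM a) (subset_refl _)
    rw [Set.ncard_singleton] at this
    omega
  · obtain ⟨x, y, hxy, rfl⟩ := Set.ncard_eq_two.mp h
    by_cases hd : Disjoint x.1 y.1
    · have := huniv {x, y} (conv_pair_adj (by omega) hM ⟨hd, hxy⟩) (subset_refl _)
      have h2 : ({x, y} : Set (KV M n)).ncard ≤ 2 := by
        have := Set.ncard_insert_le x ({y} : Set (KV M n))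
        rw [Set.ncard_singleton] at this
        omega
      omega
    · obtain ⟨C, hC, hxC, hyC, hCne⟩ := hblock x y hxy hd
      have hsub : ({x, y} : Set (KV M n)) ⊆ C := by
        intro w hw
        have hw' : w = x ∨ w = y := hw
        rcases hw' with rfl | rfl
        · exact hxC
        · exact hyC
      have h2 := hull_subset (KneserGraph M n) hC hsub
      rw [hhull] at h2
      exact hCne (Set.Subset.antisymm (Set.subset_univ C) h2)

end KneserAux
end Lower
section Final
set_option maxRecDepth 10000
open SimpleGraph Finset KneserAux

lemma key52 : ∀ x y : KV 5 2, x ≠ y → ¬ Disjoint x.1 y.1 → ((x.1 ∪ y.1)ᶜ).card = 2 := by decide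

lemma key62 : ∀ x y : KV 6 2, x ≠ y → ¬ Disjoint x.1 y.1 → ((x.1 ∪ y.1)ᶜ).card = 3 := by decide

lemma key83 : ∀ x y : KV 8 3, x ≠ y → ¬ Disjoint x.1 y.1 →
    ((x.1 ∪ y.1)ᶜ).card = 3 ∨ ((x.1 ∪ y.1)ᶜ).card = 4 := by decide

lemma hV52 : 4 ≤ Fintype.card (KV 5 2) := by decide
lemma hV62 : 4 ≤ Fintype.card (KV 6 2) := by decide
lemma hV83 : 4 ≤ Fintype.card (KV 8 3) := by decide

lemma hblock52 : ∀ x y : KV 5 2, x ≠ y → ¬ Disjoint x.1 y.1 →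
    ∃ C : Set (KV 5 2), IsGConvex (KneserGraph 5 2) C ∧ x ∈ C ∧ y ∈ C ∧ C ≠ Set.univ :=
  fun x y hne hnd => block1 (by omega) (by omega) hV52 hne hnd (key52 x y hne hnd)

lemma hblock62 : ∀ x y : KV 6 2, x ≠ y → ¬ Disjoint x.1 y.1 →
    ∃ C : Set (KV 6 2), IsGConvex (KneserGraph 6 2) C ∧ x ∈ C ∧ y ∈ C ∧ C ≠ Set.univ :=
  fun x y hne hnd => block2 (by omega) (by omega) (by omega) hne hnd (key62 x y hne hnd)

lemma hblock83 : ∀ x y : KV 8 3, x ≠ y → ¬ Disjoint x.1 y.1 →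
    ∃ C : Set (KV 8 3), IsGConvex (KneserGraph 8 3) C ∧ x ∈ C ∧ y ∈ C ∧ C ≠ Set.univ := by
  intro x y hne hnd
  rcases key83 x y hne hnd with h | h
  · exact block1 (by omega) (by omega) hV83 hne hnd h
  · exact block2 (by omega) (by omega) (by omega) hne hnd h

lemma ncard3 {V : Type*} {a b c : V} (hab : a ≠ b) (hac : a ≠ c) (hbc : b ≠ c) :
    ({a, b, c} : Set V).ncard = 3 := by
  rw [Set.ncard_insert_of_notMem (by
      intro h
      rcases h with h | h
      · exact hab h
      · exact hac h) (Set.toFinite _), Set.ncard_pair hbc]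

lemma ghn_eq_three {M n : ℕ} (hn : 2 ≤ n) (hM : 3 * n - 1 ≤ M)
    (hV : 4 ≤ Fintype.card (KV M n))
    (hblock : ∀ x y : KV M n, x ≠ y → ¬ Disjoint x.1 y.1 →
      ∃ C : Set (KV M n), IsGConvex (KneserGraph M n) C ∧ x ∈ C ∧ y ∈ C ∧ C ≠ Set.univ)
    {W3 : Set (KV M n)} (hW3 : IsGeodHullSet (KneserGraph M n) W3) (hc3 : W3.ncard = 3) :
    geodHullNumber (KneserGraph M n) = 3 := by
  have h3mem : 3 ∈ {m | ∃ W : Set (KV M n), IsGeodHullSet (KneserGraph M n) W ∧ W.ncard = m} :=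
    ⟨W3, hW3, hc3⟩
  have hle : sInf {m | ∃ W : Set (KV M n), IsGeodHullSet (KneserGraph M n) W ∧ W.ncard = m} ≤ 3 :=
    Nat.sInf_le h3mem
  have hlow := lower hn hM hV hblock
  have hge : 3 ≤ sInf {m | ∃ W : Set (KV M n), IsGeodHullSet (KneserGraph M n) W ∧ W.ncard = m} := by
    obtain ⟨W, hW, hc⟩ := Nat.sInf_mem (Set.nonempty_of_mem h3mem)
    by_contra hlt
    push_neg at hlt
    exact hlow W (by omega) hW
  exact le_antisymm hle hge

lemma ghn52 : geodHullNumber (KneserGraph 5 2) = 3 :=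
  ghn_eq_three (by omega) (by omega) hV52 hblock52 hull52
    (ncard3 (by decide) (by decide) (by decide))

lemma ghn62 : geodHullNumber (KneserGraph 6 2) = 3 :=
  ghn_eq_three (by omega) (by omega) hV62 hblock62 hull62
    (ncard3 (by decide) (by decide) (by decide))

lemma ghn83 : geodHullNumber (KneserGraph 8 3) = 3 :=
  ghn_eq_three (by omega) (by omega) hV83 hblock83 hull83
    (ncard3 (by decide) (by decide) (by decide))

end Final

theorem geodHullNumber_eq_three_iff
    (n k : ℕ) (hn : 2 ≤ n) (hk : 0 < k) (hkn : n - 1 ≤ k) :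
    geodHullNumber (KneserGraph (2 * n + k) n) = 3 ↔
      (n = 2 ∧ k = 1) ∨ (n = 2 ∧ k = 2) ∨ (n = 3 ∧ k = 2) := by
  constructor
  · intro h3
    by_contra hnot
    push_neg at hnot
    have hk3 : 3 ≤ k := by omega
    have := KneserAux.ghn_le_two n k hn hk3
    omega
  · rintro (⟨rfl, rfl⟩ | ⟨rfl, rfl⟩ | ⟨rfl, rfl⟩)
    · exact ghn52
    · exact ghn62
    · exact ghn83
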